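/- Let P be a hereditary graph class, let G be a finite graph, and let W ⊆ V(G). Then (i) every maximal P set of G contains at most one maximal P set of the induced subgraph G[W]; and consequently (ii) the number of maximal P sets of G[W] is at most the number of maximal P sets of G. -/

import Mathlib

attribute [local instance] Classical.propDecidable

/-- A *graph class*: a collection of finite simple graphs, given as a property of
simple graphs over every finite vertex type. -/
abbrev GraphClass : Type 1 :=
  ∀ (V : Type) [Fintype V], SimpleGraph V → Prop

/-- The graph class is a nonempty collection of graphs. -/
def GraphClass.NonemptyClass (P : GraphClass) : Prop :=
  ∃ (V : Type) (_ : Fintype V) (G : SimpleGraph V), P V G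

/-- The graph class is closed under isomorphism. -/
def GraphClass.IsoClosed (P : GraphClass) : Prop :=
  ∀ (V W : Type) (_ : Fintype V) (_ : Fintype W) (G : SimpleGraph V) (H : SimpleGraph W),
    _root_.Nonempty (G ≃g H) → (P V G ↔ P W H)

/-- The graph class is hereditary: it is closed under taking induced subgraphs. -/
def GraphClass.Hereditary (P : GraphClass) : Prop :=
  ∀ (V : Type) (_ : Fintype V) (G : SimpleGraph V) (S : Set V),
    P V G → P (↥S) (G.induce S)

variable {V : Type} [Fintype V]

/-- `S ⊆ V(G)` is a `P` set of `G` if the induced subgraph `G[S]` belongs to `P`. -/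
def IsPSet (P : GraphClass) (G : SimpleGraph V) (S : Set V) : Prop :=
  P (↥S) (G.induce S)

/-- `S` is a maximal `P` set of `G`: a `P` set with no proper superset that is a `P` set. -/
def IsMaxPSet (P : GraphClass) (G : SimpleGraph V) (S : Set V) : Prop :=
  IsPSet P G S ∧ ∀ T : Set V, S ⊂ T → ¬ IsPSet P G T

/-- `S` is a connected `P` set of `G`: a `P` set inducing a connected subgraph. -/
def IsConnPSet (P : GraphClass) (G : SimpleGraph V) (S : Set V) : Prop :=
  IsPSet P G S ∧ (G.induce S).Connected

/-- `S` is a maximal connected `P` set of `G`: a connected `P` set contained in no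
strictly larger connected `P` set. -/
def IsMaxConnPSet (P : GraphClass) (G : SimpleGraph V) (S : Set V) : Prop :=
  IsConnPSet P G S ∧ ∀ T : Set V, S ⊂ T → ¬ IsConnPSet P G T

/-- A forbidden set of `G` (with respect to the class `P`): an inclusion-minimal vertex
set inducing a subgraph that is not in `P`. -/
def IsForbiddenSet (P : GraphClass) (G : SimpleGraph V) (X : Set V) : Prop :=
  ¬ IsPSet P G X ∧ ∀ Y : Set V, Y ⊂ X → IsPSet P G Y


/-- The induced subgraph of an induced subgraph is isomorphic to the induced subgraph
on the image of the vertex set. -/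
noncomputable def induceInduceIso {V : Type} (G : SimpleGraph V) (A : Set V) (B : Set (↥A)) :
    (G.induce A).induce B ≃g G.induce (Subtype.val '' B) where
  toEquiv := Equiv.Set.image Subtype.val B Subtype.val_injective
  map_rel_iff' := by
    intro a b
    simp [Equiv.Set.image, Equiv.Set.imageOfInjOn]

/-- Let `P` be a hereditary graph class, `G` a finite graph and `W ⊆ V(G)`.
(i) every maximal `P` set of `G` contains at most one maximal `P` set of `G[W]`, and
(ii) the number of maximal `P` sets of `G[W]` is at most the number of maximal `P` sets
of `G`. -/
theorem maxPSets_of_induced_subgraph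
    (P : GraphClass) (hne : P.NonemptyClass) (hiso : P.IsoClosed) (hher : P.Hereditary)
    {V : Type} [Fintype V] (G : SimpleGraph V) (W : Set V) :
    (∀ S : Set V, IsMaxPSet P G S →
      ∀ T₁ T₂ : Set (↥W), IsMaxPSet P (G.induce W) T₁ → IsMaxPSet P (G.induce W) T₂ →
        Subtype.val '' T₁ ⊆ S → Subtype.val '' T₂ ⊆ S → T₁ = T₂) ∧
    {T : Set (↥W) | IsMaxPSet P (G.induce W) T}.ncard ≤
      {S : Set V | IsMaxPSet P G S}.ncard := by
  classical
  have key : ∀ (A : Set V) (B : Set (↥A)),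
      IsPSet P (G.induce A) B ↔ IsPSet P G (Subtype.val '' B) := by
    intro A B
    exact hiso _ _ _ _ _ _ ⟨induceInduceIso G A B⟩
  have subsetP : ∀ (A B : Set V), IsPSet P G A → B ⊆ A → IsPSet P G B := by
    intro A B hA hBA
    have h1 : IsPSet P (G.induce A) (Subtype.val ⁻¹' B) := hher _ _ _ _ hA
    have h2 := (key A _).mp h1
    rwa [Subtype.image_preimage_coe, Set.inter_eq_self_of_subset_right hBA] at h2
  have part1 : ∀ S : Set V, IsMaxPSet P G S →
      ∀ T₁ T₂ : Set (↥W), IsMaxPSet P (G.induce W) T₁ → IsMaxPSet P (G.induce W) T₂ →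
        Subtype.val '' T₁ ⊆ S → Subtype.val '' T₂ ⊆ S → T₁ = T₂ := by
    intro S hS T₁ T₂ h1 h2 hs1 hs2
    set T : Set (↥W) := Subtype.val ⁻¹' S with hTdef
    have hT : IsPSet P (G.induce W) T := by
      rw [key]
      apply subsetP S _ hS.1
      rw [hTdef, Subtype.image_preimage_coe]
      exact Set.inter_subset_right
    have e1 : T₁ = T := by
      have hsub : T₁ ⊆ T := Set.image_subset_iff.mp hs1
      by_contra hne'
      exact h1.2 T (hsub.ssubset_of_ne hne') hT
    have e2 : T₂ = T := by
      have hsub : T₂ ⊆ T := Set.image_subset_iff.mp hs2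
      by_contra hne'
      exact h2.2 T (hsub.ssubset_of_ne hne') hT
    rw [e1, e2]
  have exists_max : ∀ A : Set V, IsPSet P G A → ∃ S, IsMaxPSet P G S ∧ A ⊆ S := by
    intro A hA
    obtain ⟨S, hS, hmax⟩ := Set.Finite.exists_maximalFor id {B | IsPSet P G B ∧ A ⊆ B}
      (Set.toFinite _) ⟨A, hA, subset_rfl⟩
    refine ⟨S, ⟨hS.1, ?_⟩, hS.2⟩
    intro T hTS hT
    have heq := @hmax T ⟨hT, hS.2.trans hTS.subset⟩ hTS.subset
    exact hTS.ne (Set.Subset.antisymm hTS.subset heq)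
  refine ⟨part1, ?_⟩
  choose! f hf hf2 using fun T (h : IsMaxPSet P (G.induce W) T) =>
    exists_max (Subtype.val '' T) ((key W T).mp h.1)
  apply Set.ncard_le_ncard_of_injOn f
  · intro T hT
    exact hf T hT
  · intro T₁ h1 T₂ h2 heq
    exact part1 (f T₁) (hf T₁ h1) T₁ T₂ h1 h2 (hf2 T₁ h1) (heq ▸ hf2 T₂ h2)
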